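/- For the simple exclusion generator L with jump law p, the generator L* with reversed law p*(x) = p(-x), and any local function g: Σ_x ⟨(ξ(0)-ξ(e_k)) · τ_x(L + L*)g⟩_ρ = 0, i.e. ⟨∇_{e_k}ξ(0), Lg⟩_{ρ,0} = -⟨∇_{e_k}ξ(0), L*g⟩_{ρ,0}, where ⟨f,h⟩_{ρ,0} = Σ_x ⟨f, τ_x h⟩_ρ. -/

import Mathlib

open Finset

/-- Sites of the lattice `ℤ^d`. -/
abbrev Site (d : ℕ) := Fin d → ℤ

/-- Configurations of the exclusion process: `{0,1}^{ℤ^d}`. -/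
abbrev Config (d : ℕ) := Site d → Bool

/-- Real-valued occupation indicator. -/
def ind (b : Bool) : ℝ := if b then 1 else 0

/-- `f` is a local function depending only on the coordinates in the finite set `S`. -/
def IsLocal {d : ℕ} (f : Config d → ℝ) (S : Finset (Site d)) : Prop :=
  ∀ ξ η : Config d, (∀ x ∈ S, ξ x = η x) → f ξ = f η

/-- Expectation of a local function (with support in `S`) under the Bernoulli
product measure with parameter `θ`: a finite sum over configurations on `S`. -/
noncomputable def expect {d : ℕ} (θ : ℝ) (S : Finset (Site d)) (f : Config d → ℝ) : ℝ :=
  ∑ η : {x // x ∈ S} → Bool,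
    (∏ x : {x // x ∈ S}, if η x then θ else 1 - θ) *
      f (fun z => if h : z ∈ S then η ⟨z, h⟩ else false)

/-- The configuration `ξ^{x,y}` with the values at `x` and `y` exchanged. -/
def swap {d : ℕ} (x y : Site d) (ξ : Config d) : Config d :=
  fun z => if z = x then ξ y else if z = y then ξ x else ξ z

/-- Spatial shift: `(shift x ξ) z = ξ (x + z)`, so `τ_x g = g ∘ shift x`. -/
def shift {d : ℕ} (x : Site d) (ξ : Config d) : Config d := fun z => ξ (x + z)

/-- Reflection: `(refl ξ) z = ξ (-z)`. -/
def confRefl {d : ℕ} (ξ : Config d) : Config d := fun z => ξ (-z)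

/-- The simple exclusion generator with jump law `p`, truncated to the finite
set `E` of sites (which is assumed large enough in the statements):
`L f (ξ) = Σ_{x,y} p(y-x) ξ(x)(1-ξ(y)) (f(ξ^{x,y}) - f(ξ))`. -/
noncomputable def gen {d : ℕ} (p : Site d → ℝ) (E : Finset (Site d))
    (f : Config d → ℝ) (ξ : Config d) : ℝ :=
  ∑ x ∈ E, ∑ y ∈ E, p (y - x) * ind (ξ x) * (1 - ind (ξ y)) * (f (swap x y ξ) - f ξ)

/-! ### Auxiliary material -/

section Aux

variable {d : ℕ}

/-- Extension of a partial configuration by `false`. -/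
def extC {d : ℕ} (T : Finset (Site d)) (η : {x // x ∈ T} → Bool) : Config d :=
  fun z => if h : z ∈ T then η ⟨z, h⟩ else false

lemma expect_eq (θ : ℝ) (T : Finset (Site d)) (f : Config d → ℝ) :
    _root_.expect θ T f =
      ∑ η : {x // x ∈ T} → Bool,
        (∏ x : {x // x ∈ T}, if η x then θ else 1 - θ) * f (extC T η) := rfl

lemma swap_left (a b : Site d) (ξ : Config d) : swap a b ξ a = ξ b := by simp [swap]

lemma swap_right (a b : Site d) (ξ : Config d) : swap a b ξ b = ξ a := by
  by_cases h : b = a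
  · subst h; exact swap_left b b ξ
  · simp [swap, h]

lemma swap_other {a b z : Site d} (h1 : z ≠ a) (h2 : z ≠ b) (ξ : Config d) :
    swap a b ξ z = ξ z := by simp [swap, h1, h2]

lemma swap_comm (a b : Site d) (ξ : Config d) : swap a b ξ = swap b a ξ := by
  funext z; unfold swap
  by_cases h1 : z = a <;> by_cases h2 : z = b
  · subst h1; subst h2; simp
  · rw [if_pos h1, if_neg h2, if_pos h1]
  · rw [if_neg h1, if_pos h2, if_pos h2]
  · rw [if_neg h1, if_neg h2, if_neg h2, if_neg h1]

lemma swap_swap (a b : Site d) (ξ : Config d) : swap a b (swap a b ξ) = ξ := by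
  funext z
  by_cases h1 : z = a
  · subst h1; rw [swap_left, swap_right]
  · by_cases h2 : z = b
    · subst h2; rw [swap_right, swap_left]
    · rw [swap_other h1 h2, swap_other h1 h2]

lemma shift_apply (x : Site d) (ξ : Config d) (z : Site d) : shift x ξ z = ξ (x + z) := rfl

lemma shift_swap (x u v : Site d) (ξ : Config d) :
    swap u v (shift x ξ) = shift x (swap (x + u) (x + v) ξ) := by
  funext z; simp only [swap, shift, add_right_inj]

lemma expect_congr {θ : ℝ} {T : Finset (Site d)} {f h : Config d → ℝ}
    (hfh : ∀ ξ, f ξ = h ξ) : _root_.expect θ T f = _root_.expect θ T h := by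
  have : f = h := funext hfh
  rw [this]

lemma expect_sum {θ : ℝ} {T : Finset (Site d)} {ι : Type*} (A : Finset ι)
    (F : ι → Config d → ℝ) :
    _root_.expect θ T (fun ξ => ∑ i ∈ A, F i ξ) = ∑ i ∈ A, _root_.expect θ T (F i) := by
  unfold _root_.expect; simp_rw [Finset.mul_sum]; exact Finset.sum_comm

lemma expect_const_mul {θ : ℝ} {T : Finset (Site d)} (c : ℝ) (f : Config d → ℝ) :
    _root_.expect θ T (fun ξ => c * f ξ) = c * _root_.expect θ T f := by
  unfold _root_.expect; rw [Finset.mul_sum]; apply Finset.sum_congr rfl; intros; ring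

lemma expect_sub {θ : ℝ} {T : Finset (Site d)} (f h : Config d → ℝ) :
    _root_.expect θ T (fun ξ => f ξ - h ξ) = _root_.expect θ T f - _root_.expect θ T h := by
  unfold _root_.expect; rw [← Finset.sum_sub_distrib]; apply Finset.sum_congr rfl; intros; ring

lemma swap_ext (a b : Site d) {T : Finset (Site d)} (ha : a ∈ T) (hb : b ∈ T)
    (η : {x // x ∈ T} → Bool) :
    swap a b (extC T η) = extC T (fun i => η (Equiv.swap ⟨a, ha⟩ ⟨b, hb⟩ i)) := by
  funext z
  by_cases hz : z ∈ T
  · by_cases hza : z = a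
    · rw [hza, swap_left]
      simp only [extC, dif_pos hb, dif_pos ha]
      rw [Equiv.swap_apply_left]
    · by_cases hzb : z = b
      · rw [hzb, swap_right]
        simp only [extC, dif_pos ha, dif_pos hb]
        rw [Equiv.swap_apply_right]
      · have h1 : (⟨z, hz⟩ : {x // x ∈ T}) ≠ ⟨a, ha⟩ := by
          intro h; exact hza (congrArg Subtype.val h)
        have h2 : (⟨z, hz⟩ : {x // x ∈ T}) ≠ ⟨b, hb⟩ := by
          intro h; exact hzb (congrArg Subtype.val h)
        rw [swap_other hza hzb]
        simp only [extC, dif_pos hz]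
        rw [Equiv.swap_apply_of_ne_of_ne h1 h2]
  · have hza : z ≠ a := fun h => hz (h ▸ ha)
    have hzb : z ≠ b := fun h => hz (h ▸ hb)
    simp only [swap, extC, if_neg hza, if_neg hzb, dif_neg hz]

lemma expect_swap_inv {θ : ℝ} {T : Finset (Site d)} {a b : Site d}
    (ha : a ∈ T) (hb : b ∈ T) (F : Config d → ℝ) :
    _root_.expect θ T (fun ξ => F (swap a b ξ)) = _root_.expect θ T F := by
  classical
  rw [expect_eq, expect_eq]
  set σ : {x // x ∈ T} ≃ {x // x ∈ T} := Equiv.swap ⟨a, ha⟩ ⟨b, hb⟩ with hσ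
  have hinv : Function.Involutive (fun (η : {x // x ∈ T} → Bool) => η ∘ σ) := by
    intro η; funext i; simp [σ]
  apply Fintype.sum_bijective _ hinv.bijective
  intro η
  have hw : (∏ x : {x // x ∈ T}, if η (σ x) then θ else 1 - θ)
      = ∏ x : {x // x ∈ T}, if η x then θ else 1 - θ :=
    Equiv.prod_comp σ (fun i => if η i then θ else 1 - θ)
  have he : F (swap a b (extC T η)) = F (extC T (η ∘ σ)) := by
    rw [swap_ext a b ha hb η]; rfl
  simp only [Function.comp]
  rw [hw, he]

lemma isLocal_mono {f : Config d → ℝ} {S T : Finset (Site d)} (h : IsLocal f S)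
    (hST : S ⊆ T) : IsLocal f T :=
  fun ξ η hξη => h ξ η (fun x hx => hξη x (hST hx))

/-- Translation bijection onto the image. -/
def transEquiv (x : Site d) (S : Finset (Site d)) :
    {z // z ∈ S} ≃ {z // z ∈ S.image (fun z => x + z)} where
  toFun i := ⟨x + i.1, Finset.mem_image_of_mem _ i.2⟩
  invFun j := ⟨-x + j.1, by
    obtain ⟨y, hy, hxy⟩ := Finset.mem_image.mp j.2
    have : -x + j.1 = y := by rw [← hxy]; abel
    rw [this]; exact hy⟩
  left_inv i := Subtype.ext (by simp)
  right_inv j := Subtype.ext (by simp)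

lemma expect_translate (θ : ℝ) (S : Finset (Site d)) (x : Site d) (f : Config d → ℝ)
    (hf : IsLocal f S) :
    _root_.expect θ (S.image (fun z => x + z)) (fun ξ => f (shift x ξ)) =
      _root_.expect θ S f := by
  classical
  rw [expect_eq, expect_eq]
  set S' := S.image (fun z => x + z) with hS'
  set σ := transEquiv x S with hσdef
  apply Fintype.sum_equiv (Equiv.arrowCongr σ (Equiv.refl Bool)).symm
  intro η'
  have hw : (∏ i : {z // z ∈ S'}, if η' i then θ else 1 - θ)
      = ∏ i : {z // z ∈ S}, if η' (σ i) then θ else 1 - θ :=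
    (Equiv.prod_comp σ (fun j => if η' j then θ else 1 - θ)).symm
  have hv : f (shift x (extC S' η')) = f (extC S (fun i => η' (σ i))) := by
    apply hf
    intro z hz
    have hz' : x + z ∈ S' := Finset.mem_image_of_mem _ hz
    simp only [shift, extC, dif_pos hz', dif_pos hz]
    rfl
  show (∏ i : {z // z ∈ S'}, if η' i then θ else 1 - θ) * f (shift x (extC S' η'))
      = (∏ i : {z // z ∈ S}, if η' (σ i) then θ else 1 - θ) * f (extC S (fun i => η' (σ i)))
  rw [hw, hv]

/-- Splitting off the coordinate at an inserted site. -/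
def insEquiv (a : Site d) (T : Finset (Site d)) (haT : a ∉ T) :
    ({x // x ∈ insert a T} → Bool) ≃ (({x // x ∈ T} → Bool) × Bool) where
  toFun η := (fun i => η ⟨i.1, Finset.mem_insert_of_mem i.2⟩,
      η ⟨a, Finset.mem_insert_self a T⟩)
  invFun ηb := fun i => if h : i.1 ∈ T then ηb.1 ⟨i.1, h⟩ else ηb.2
  left_inv η := by
    funext i
    by_cases h : i.1 ∈ T
    · simp only [dif_pos h]
    · simp only [dif_neg h]
      have : i.1 = a := by
        rcases Finset.mem_insert.mp i.2 with h' | h'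
        · exact h'
        · exact absurd h' h
      exact congrArg η (Subtype.ext this.symm)
  right_inv ηb := by
    refine Prod.ext ?_ ?_
    · funext i; simp only [dif_pos i.2]
    · simp only [dif_neg haT]

lemma expect_insert {θ : ℝ} {T : Finset (Site d)} {a : Site d} (haT : a ∉ T)
    (f : Config d → ℝ) (hf : IsLocal f T) :
    _root_.expect θ (insert a T) f = _root_.expect θ T f := by
  classical
  rw [expect_eq, expect_eq]
  rw [Fintype.sum_equiv (insEquiv a T haT)
    (fun η => (∏ x : {x // x ∈ insert a T}, if η x then θ else 1 - θ) * f (extC _ η))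
    (fun ηb => ((if ηb.2 then θ else 1 - θ) *
      ((∏ x : {x // x ∈ T}, if ηb.1 x then θ else 1 - θ) * f (extC T ηb.1))))
    ?_]
  · rw [Fintype.sum_prod_type]
    apply Finset.sum_congr rfl
    intro ηT _
    rw [Fintype.sum_bool]
    simp
    ring
  · intro η
    set W : Site d → ℝ := fun z =>
      if h : z ∈ insert a T then (if η ⟨z, h⟩ then θ else 1 - θ) else 1 with hW
    have h1 : (∏ x : {x // x ∈ insert a T}, if η x then θ else 1 - θ)
        = ∏ x : {x // x ∈ insert a T}, W x.1 := by
      apply Finset.prod_congr rfl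
      intro x _
      simp only [hW]
      rw [dif_pos x.2]
    have h2 : (∏ x : {x // x ∈ insert a T}, W x.1) = ∏ z ∈ insert a T, W z :=
      Finset.prod_coe_sort _ _
    have h3 : (∏ z ∈ insert a T, W z) = W a * ∏ z ∈ T, W z := Finset.prod_insert haT
    have h4 : (∏ z ∈ T, W z) = ∏ x : {x // x ∈ T}, W x.1 := (Finset.prod_coe_sort _ _).symm
    have h5 : (∏ x : {x // x ∈ T}, W x.1)
        = ∏ x : {x // x ∈ T}, if η ⟨x.1, Finset.mem_insert_of_mem x.2⟩ then θ else 1 - θ := by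
      apply Finset.prod_congr rfl
      intro x _
      simp only [hW]
      rw [dif_pos (Finset.mem_insert_of_mem x.2)]
    have h6 : W a = if η ⟨a, Finset.mem_insert_self a T⟩ then θ else 1 - θ := by
      simp only [hW]
      rw [dif_pos (Finset.mem_insert_self a T)]
    have h7 : f (extC (insert a T) η)
        = f (extC T (fun i => η ⟨i.1, Finset.mem_insert_of_mem i.2⟩)) := by
      apply hf
      intro z hz
      simp only [extC, dif_pos hz, dif_pos (Finset.mem_insert_of_mem hz)]
    show (∏ x : {x // x ∈ insert a T}, if η x then θ else 1 - θ) * f (extC _ η)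
        = (if η ⟨a, Finset.mem_insert_self a T⟩ then θ else 1 - θ) *
          ((∏ x : {x // x ∈ T}, if η ⟨x.1, Finset.mem_insert_of_mem x.2⟩ then θ else 1 - θ) *
            f (extC T (fun i => η ⟨i.1, Finset.mem_insert_of_mem i.2⟩)))
    rw [h1, h2, h3, h4, h5, h6, h7]
    ring

lemma expect_subset {θ : ℝ} {S T : Finset (Site d)} (hST : S ⊆ T) (f : Config d → ℝ)
    (hf : IsLocal f S) :
    _root_.expect θ T f = _root_.expect θ S f := by
  classical
  have key : ∀ D : Finset (Site d), _root_.expect θ (S ∪ D) f = _root_.expect θ S f := by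
    intro D
    induction D using Finset.induction_on with
    | empty => rw [Finset.union_empty]
    | insert _ _ haD ih =>
        rename_i a D
        by_cases h : a ∈ S ∪ D
        · rw [Finset.union_insert, Finset.insert_eq_self.mpr h, ih]
        · rw [Finset.union_insert,
            expect_insert h f (isLocal_mono hf Finset.subset_union_left), ih]
  have := key (T \ S)
  rwa [Finset.union_sdiff_of_subset hST] at this

/-- The elementary single-site exchange identity. -/
lemma key_one (a b z : Site d) (ξ : Config d) :
    (ind (swap a b ξ z) - ind (ξ z)) * (ind (ξ a) * (1 - ind (ξ b)))
      = ((if z = b then 1 else 0) - (if z = a then 1 else 0)) *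
          (ind (ξ a) * (1 - ind (ξ b))) := by
  by_cases h1 : z = a
  · by_cases h2 : z = b
    · have hab : a = b := h1.symm.trans h2
      simp only [swap, h1, hab, if_pos rfl, if_true, eq_self_iff_true]
      ring
    · have hab : a ≠ b := fun h => h2 (h1.trans h)
      simp only [swap, h1, if_pos rfl, if_neg hab]
      cases hA : ξ a <;> cases hB : ξ b <;> simp [ind]
  · by_cases h2 : z = b
    · have hba : ¬b = a := fun h => h1 (h2.trans h)
      simp only [swap, h2, if_neg hba, if_pos rfl]
      cases hA : ξ a <;> cases hB : ξ b <;> simp [ind]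
    · simp only [swap, if_neg h1, if_neg h2]
      ring

/-- The two-site exchange identity. -/
lemma key_id (a b z0 z1 : Site d) (ξ : Config d) :
    (ind (swap a b ξ z0) - ind (swap a b ξ z1) - (ind (ξ z0) - ind (ξ z1))) *
        (ind (ξ a) * (1 - ind (ξ b)))
      = (((if z0 = b then 1 else 0) - (if z0 = a then 1 else 0)
          + (if z1 = a then 1 else 0) - (if z1 = b then 1 else 0)) : ℝ) *
        (ind (ξ a) * (1 - ind (ξ b))) := by
  linear_combination key_one a b z0 ξ - key_one a b z1 ξ

lemma sum_sum_sub {ι : Type*} (s t : Finset ι) (A B : ι → ι → ℝ) :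
    (∑ u ∈ s, ∑ v ∈ t, (A u v - B u v))
      = (∑ u ∈ s, ∑ v ∈ t, A u v) - ∑ u ∈ s, ∑ v ∈ t, B u v := by
  rw [← Finset.sum_sub_distrib]
  refine Finset.sum_congr rfl fun u _ => ?_
  rw [← Finset.sum_sub_distrib]

/-- The combinatorial coefficient produced by the exchange identity. -/
def mcoef (e a b : Site d) : ℝ :=
  ((if (0 : Site d) = b then 1 else 0) - (if (0 : Site d) = a then 1 else 0)
    + (if e = a then 1 else 0) - (if e = b then 1 else 0) : ℝ)

/-- The elementary local observable appearing after summation by parts. -/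
def KF {d : ℕ} (g : Config d → ℝ) (u v : Site d) (ζ : Config d) : ℝ :=
  ind (ζ u) * (1 - ind (ζ v)) * g ζ

lemma lem_per_x (ρ : ℝ) (p : Site d → ℝ) (g : Config d → ℝ) (E T : Finset (Site d))
    (e x : Site d) (hxT : ∀ y ∈ E, x + y ∈ T) :
    _root_.expect ρ T (fun ξ => (ind (ξ 0) - ind (ξ e)) *
        (gen p E g (shift x ξ) + gen (fun z => p (-z)) E g (shift x ξ)))
      = ∑ u ∈ E, ∑ v ∈ E, (p (v - u) + p (u - v)) *
          (mcoef e (x + u) (x + v) *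
            _root_.expect ρ T (fun ζ => KF g u v (shift x ζ))) := by
  classical
  have e1 : _root_.expect ρ T (fun ξ => (ind (ξ 0) - ind (ξ e)) *
      (gen p E g (shift x ξ) + gen (fun z => p (-z)) E g (shift x ξ)))
      = ∑ u ∈ E, ∑ v ∈ E, _root_.expect ρ T (fun ξ =>
          (p (v - u) + p (u - v)) * ((ind (ξ 0) - ind (ξ e)) *
            (ind (ξ (x + u)) * (1 - ind (ξ (x + v))) *
              (g (shift x (swap (x + u) (x + v) ξ)) - g (shift x ξ))))) := by
    have hpt : ∀ ξ : Config d, (ind (ξ 0) - ind (ξ e)) *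
        (gen p E g (shift x ξ) + gen (fun z => p (-z)) E g (shift x ξ))
        = ∑ u ∈ E, ∑ v ∈ E, (p (v - u) + p (u - v)) * ((ind (ξ 0) - ind (ξ e)) *
            (ind (ξ (x + u)) * (1 - ind (ξ (x + v))) *
              (g (shift x (swap (x + u) (x + v) ξ)) - g (shift x ξ)))) := by
      intro ξ
      simp only [gen, shift_swap, shift, neg_sub]
      rw [← Finset.sum_add_distrib, Finset.mul_sum]
      apply Finset.sum_congr rfl
      intro u _
      rw [← Finset.sum_add_distrib, Finset.mul_sum]
      apply Finset.sum_congr rfl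
      intro v _
      ring
    rw [expect_congr hpt, expect_sum]
    apply Finset.sum_congr rfl
    intro u _
    rw [expect_sum]
  have e2 : ∀ u ∈ E, ∀ v ∈ E,
      _root_.expect ρ T (fun ξ =>
          (p (v - u) + p (u - v)) * ((ind (ξ 0) - ind (ξ e)) *
            (ind (ξ (x + u)) * (1 - ind (ξ (x + v))) *
              (g (shift x (swap (x + u) (x + v) ξ)) - g (shift x ξ)))))
        = (p (v - u) + p (u - v)) *
            (_root_.expect ρ T (fun ζ =>
                (ind (swap (x + u) (x + v) ζ 0) - ind (swap (x + u) (x + v) ζ e)) *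
                  (ind (ζ (x + v)) * (1 - ind (ζ (x + u))) * g (shift x ζ)))
              - _root_.expect ρ T (fun ζ => (ind (ζ 0) - ind (ζ e)) *
                  (ind (ζ (x + u)) * (1 - ind (ζ (x + v))) * g (shift x ζ)))) := by
    intro u hu v hv
    have haT : x + u ∈ T := hxT u hu
    have hbT : x + v ∈ T := hxT v hv
    have hswap := expect_swap_inv (θ := ρ) haT hbT (fun ζ =>
      (ind (swap (x + u) (x + v) ζ 0) - ind (swap (x + u) (x + v) ζ e)) *
        (ind (ζ (x + v)) * (1 - ind (ζ (x + u))) * g (shift x ζ)))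
    have hpt : ∀ ξ : Config d,
        (p (v - u) + p (u - v)) * ((ind (ξ 0) - ind (ξ e)) *
          (ind (ξ (x + u)) * (1 - ind (ξ (x + v))) *
            (g (shift x (swap (x + u) (x + v) ξ)) - g (shift x ξ))))
        = (p (v - u) + p (u - v)) *
            ((fun ζ => (ind (swap (x + u) (x + v) ζ 0) - ind (swap (x + u) (x + v) ζ e)) *
              (ind (ζ (x + v)) * (1 - ind (ζ (x + u))) * g (shift x ζ)))
                (swap (x + u) (x + v) ξ)
              - (ind (ξ 0) - ind (ξ e)) *
                  (ind (ξ (x + u)) * (1 - ind (ξ (x + v))) * g (shift x ξ))) := by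
      intro ξ
      simp only [swap_swap, swap_right, swap_left]
      ring
    rw [expect_congr hpt, expect_const_mul, expect_sub, hswap]
  rw [e1, Finset.sum_congr rfl (fun u hu => Finset.sum_congr rfl (fun v hv => e2 u hu v hv))]
  have e3 : (∑ u ∈ E, ∑ v ∈ E, (p (v - u) + p (u - v)) *
      _root_.expect ρ T (fun ζ =>
        (ind (swap (x + u) (x + v) ζ 0) - ind (swap (x + u) (x + v) ζ e)) *
          (ind (ζ (x + v)) * (1 - ind (ζ (x + u))) * g (shift x ζ))))
      = ∑ u ∈ E, ∑ v ∈ E, (p (v - u) + p (u - v)) *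
        _root_.expect ρ T (fun ζ =>
          (ind (swap (x + u) (x + v) ζ 0) - ind (swap (x + u) (x + v) ζ e)) *
            (ind (ζ (x + u)) * (1 - ind (ζ (x + v))) * g (shift x ζ))) := by
    rw [Finset.sum_comm]
    refine Finset.sum_congr rfl fun u _ => Finset.sum_congr rfl fun v _ => ?_
    have hcoef : p (u - v) + p (v - u) = p (v - u) + p (u - v) := add_comm _ _
    rw [hcoef]
    congr 1
    apply _root_.expect_congr
    intro ζ
    rw [swap_comm]
  rw [Finset.sum_congr rfl (fun u (hu : u ∈ E) =>
    Finset.sum_congr rfl (fun v (hv : v ∈ E) => mul_sub _ _ _))]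
  rw [sum_sum_sub E E _ _]
  rw [e3]
  rw [← sum_sum_sub E E _ _]
  refine Finset.sum_congr rfl fun u hu => ?_
  refine Finset.sum_congr rfl fun v hv => ?_
  rw [← mul_sub]
  congr 1
  rw [← expect_sub, ← expect_const_mul]
  apply _root_.expect_congr
  intro ζ
  have hkey := key_id (x + u) (x + v) 0 e ζ
  simp only [KF, shift_apply, mcoef]
  linear_combination g (shift x ζ) * hkey

lemma lem_const (ρ : ℝ) (g : Config d → ℝ) (Sg E T : Finset (Site d))
    (hg : IsLocal g Sg) (hSgE : Sg ⊆ E) (u v : Site d) (hu : u ∈ E) (hv : v ∈ E)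
    (x : Site d) (hxT : ∀ y ∈ E, x + y ∈ T) :
    _root_.expect ρ T (fun ζ => KF g u v (shift x ζ)) = _root_.expect ρ E (KF g u v) := by
  have hKloc : IsLocal (KF g u v) E := by
    intro ζ η hζη
    simp only [KF]
    rw [hζη u hu, hζη v hv, hg ζ η (fun z hz => hζη z (hSgE hz))]
  have hloc2 : IsLocal (fun ζ => KF g u v (shift x ζ)) (E.image (fun z => x + z)) := by
    intro ζ η hζη
    apply hKloc
    intro z hz
    exact hζη (x + z) (Finset.mem_image_of_mem _ hz)
  have hsub : E.image (fun z => x + z) ⊆ T := by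
    intro y hy
    obtain ⟨z, hz, rfl⟩ := Finset.mem_image.mp hy
    exact hxT z hz
  rw [expect_subset hsub _ hloc2, expect_translate ρ E x (KF g u v) hKloc]

lemma lem_count (e : Site d) (X : Finset (Site d)) (u v : Site d)
    (hu1 : -u ∈ X) (hu2 : e - u ∈ X) (hv1 : -v ∈ X) (hv2 : e - v ∈ X) :
    ∑ x ∈ X, mcoef e (x + u) (x + v) = 0 := by
  classical
  have h1 : ∀ c w : Site d, ((0 : Site d) = w + c) = (w = -c) := by
    intro c w
    apply propext
    constructor
    · intro h; exact eq_neg_of_add_eq_zero_left h.symm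
    · intro h; rw [h]; rw [neg_add_cancel]
  have h2 : ∀ c w : Site d, (e = w + c) = (w = e - c) := by
    intro c w
    apply propext
    constructor
    · intro h; exact eq_sub_of_add_eq h.symm
    · intro h; rw [h]; rw [sub_add_cancel]
  simp only [mcoef, h1, h2]
  rw [Finset.sum_sub_distrib, Finset.sum_add_distrib, Finset.sum_sub_distrib]
  rw [Finset.sum_ite_eq', Finset.sum_ite_eq', Finset.sum_ite_eq', Finset.sum_ite_eq']
  rw [if_pos hv1, if_pos hu1, if_pos hu2, if_pos hv2]
  norm_num

end Aux

/-- `⟨∇_{e_k}ξ(0), (L + L*)g⟩_{ρ,0} = 0`, i.e.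
`Σ_x ⟨(ξ(0)-ξ(e_k)) · τ_x(L+L*)g⟩_ρ = 0`; `X` collects the finitely many sites with
nonvanishing summand, the expectations being computed on a large enough set `T`. -/
theorem stmt15 {d : ℕ} (ρ : ℝ) (hρ : ρ ∈ Set.Icc (0:ℝ) 1)
    (p : Site d → ℝ) (P : Finset (Site d))
    (hp0 : p 0 = 0) (hpnn : ∀ z, 0 ≤ p z) (hsum : ∑ z ∈ P, p z = 1)
    (hsupp : ∀ z ∉ P, p z = 0)
    (g : Config d → ℝ) (Sg E : Finset (Site d)) (hg : IsLocal g Sg) (hSgE : Sg ⊆ E)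
    (hclosed : ∀ x ∈ Sg, ∀ z ∈ P, x + z ∈ E ∧ x - z ∈ E)
    (k : Fin d) (X T : Finset (Site d))
    (hXT : ∀ x ∈ X, ∀ y ∈ E, x + y ∈ T)
    (h0T : (0 : Site d) ∈ T) (hekT : (Pi.single k 1 : Site d) ∈ T)
    (hX : ∀ x : Site d, x ∉ X →
      Disjoint ({(0 : Site d), Pi.single k 1} : Finset (Site d))
        (E.image (fun y => x + y))) :
    ∑ x ∈ X, expect ρ T (fun ξ =>
        (ind (ξ 0) - ind (ξ (Pi.single k 1))) *
          (gen p E g (shift x ξ) + gen (fun z => p (-z)) E g (shift x ξ))) = 0 := by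
  classical
  set e : Site d := Pi.single k 1 with he
  have hmemX : ∀ u ∈ E, -u ∈ X ∧ e - u ∈ X := by
    intro u hu
    constructor
    · by_contra h
      have hd := hX (-u) h
      have hm : (0 : Site d) ∈ ({(0 : Site d), e} : Finset (Site d)) :=
        Finset.mem_insert_self _ _
      have hm' : (0 : Site d) ∈ E.image (fun y => -u + y) :=
        Finset.mem_image.mpr ⟨u, hu, by rw [neg_add_cancel]⟩
      exact (Finset.disjoint_left.mp hd hm) hm'
    · by_contra h
      have hd := hX (e - u) h
      have hm : e ∈ ({(0 : Site d), e} : Finset (Site d)) :=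
        Finset.mem_insert_of_mem (Finset.mem_singleton_self _)
      have hm' : e ∈ E.image (fun y => (e - u) + y) :=
        Finset.mem_image.mpr ⟨u, hu, by rw [sub_add_cancel]⟩
      exact (Finset.disjoint_left.mp hd hm) hm'
  have hper : ∀ x ∈ X,
      expect ρ T (fun ξ => (ind (ξ 0) - ind (ξ e)) *
        (gen p E g (shift x ξ) + gen (fun z => p (-z)) E g (shift x ξ)))
      = ∑ u ∈ E, ∑ v ∈ E, (p (v - u) + p (u - v)) *
          (mcoef e (x + u) (x + v) * expect ρ E (KF g u v)) := by
    intro x hx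
    rw [lem_per_x ρ p g E T e x (fun y hy => hXT x hx y hy)]
    refine Finset.sum_congr rfl fun u hu => Finset.sum_congr rfl fun v hv => ?_
    rw [lem_const ρ g Sg E T hg hSgE u v hu hv x (fun y hy => hXT x hx y hy)]
  rw [Finset.sum_congr rfl hper]
  rw [Finset.sum_comm]
  apply Finset.sum_eq_zero
  intro u hu
  rw [Finset.sum_comm]
  apply Finset.sum_eq_zero
  intro v hv
  have hre : ∀ x ∈ X, (p (v - u) + p (u - v)) *
      (mcoef e (x + u) (x + v) * expect ρ E (KF g u v))
      = ((p (v - u) + p (u - v)) * expect ρ E (KF g u v)) * mcoef e (x + u) (x + v) := by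
    intros; ring
  rw [Finset.sum_congr rfl hre, ← Finset.mul_sum,
    lem_count e X u v (hmemX u hu).1 (hmemX u hu).2 (hmemX v hv).1 (hmemX v hv).2, mul_zero]
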